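/- Let 𝓕 be a class of finite graphs closed under taking subgraphs. If G, H ∈ 𝓕 satisfy hom(A,G) = hom(A,H) for all A ∈ 𝓕, then G and H are isomorphic. -/

import Mathlib

open Function

/-- The number of graph homomorphisms from G to H. -/
noncomputable def homCount {V W : Type*} (G : SimpleGraph V) (H : SimpleGraph W) : ℕ :=
  Nat.card (G →g H)

noncomputable section
namespace LovaszAux

variable {V W : Type}

instance finiteSetoid (W : Type) [Finite W] : Finite (Setoid W) :=
  Finite.of_injective (fun s : Setoid W => (s : W → W → Prop))
    (fun s t h => Setoid.ext fun a b => by rw [show (s : W → W → Prop) = t from h])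

noncomputable instance fintypeSetoid (W : Type) [Finite W] : Fintype (Setoid W) :=
  Fintype.ofFinite _

instance finiteHom (A : SimpleGraph W) (G : SimpleGraph V) [Finite W] [Finite V] :
    Finite (A →g G) :=
  Finite.of_injective (fun f => (f : W → V)) DFunLike.coe_injective

/-- number of injective homomorphisms -/
def injCount (A : SimpleGraph W) (G : SimpleGraph V) : ℕ :=
  Nat.card {f : A →g G // Injective f}

def quotGraph (A : SimpleGraph W) (s : Setoid W) : SimpleGraph (Quotient s) where
  Adj x y := x ≠ y ∧ ∃ a b, A.Adj a b ∧ Quotient.mk s a = x ∧ Quotient.mk s b = y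
  symm := ⟨by rintro x y ⟨hne, a, b, hab, ha, hb⟩; exact ⟨hne.symm, b, a, hab.symm, hb, ha⟩⟩
  loopless := ⟨fun x h => h.1 rfl⟩

def Indep (A : SimpleGraph W) (s : Setoid W) : Prop := ∀ a b, s a b → ¬ A.Adj a b

def fiberEquiv (A : SimpleGraph W) (G : SimpleGraph V) (s : Setoid W) (hs : Indep A s) :
    {f : A →g G // Setoid.ker ⇑f = s} ≃ {g : quotGraph A s →g G // Injective ⇑g} where
  toFun p :=
    ⟨⟨Quotient.lift ⇑p.1 (fun a b h => by rw [← p.2] at h; exact h), by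
        rintro x y ⟨-, a, b, hab, rfl, rfl⟩
        exact p.1.map_rel hab⟩, by
      rintro ⟨a⟩ ⟨b⟩ h
      have : Setoid.ker ⇑p.1 a b := h
      rw [p.2] at this
      exact Quotient.sound this⟩
  invFun p :=
    ⟨⟨fun a => p.1 (Quotient.mk s a), fun {a b} hab =>
        p.1.map_rel ⟨fun h => hs a b (Quotient.exact h) hab, a, b, hab, rfl, rfl⟩⟩, by
      refine Setoid.ext fun a b => ?_
      have : (Setoid.ker fun a => p.1 (Quotient.mk s a)) a b ↔ p.1 ⟦a⟧ = p.1 ⟦b⟧ := Iff.rfl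
      rw [show ((Setoid.ker fun a => p.1 (Quotient.mk s a)) a b) ↔ p.1 ⟦a⟧ = p.1 ⟦b⟧ from Iff.rfl,
        p.2.eq_iff, Quotient.eq]⟩
  left_inv p := Subtype.ext (DFunLike.ext _ _ fun a => rfl)
  right_inv p := Subtype.ext (DFunLike.ext _ _ fun x => by induction x using Quotient.ind; rfl)

lemma fiber_isEmpty (A : SimpleGraph W) (G : SimpleGraph V) (s : Setoid W) (hs : ¬ Indep A s) :
    IsEmpty {f : A →g G // Setoid.ker ⇑f = s} := by
  constructor
  rintro ⟨f, hf⟩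
  simp only [Indep, not_forall, not_not] at hs
  obtain ⟨a, b, hab, hadj⟩ := hs
  rw [← hf] at hab
  exact (f.map_rel hadj).ne hab

lemma hom_card_eq_sum [Fintype W] [Fintype V] (A : SimpleGraph W) (G : SimpleGraph V) :
    Nat.card (A →g G)
      = ∑ s ∈ (Finset.univ : Finset (Setoid W)), Nat.card {f : A →g G // Setoid.ker ⇑f = s} := by
  classical
  letI : Fintype (A →g G) := Fintype.ofFinite _
  rw [Nat.card_congr (Equiv.sigmaFiberEquiv (fun f : A →g G => Setoid.ker ⇑f)).symm]
  rw [Nat.card_eq_fintype_card, Fintype.card_sigma]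
  exact Finset.sum_congr rfl fun s _ => (Nat.card_eq_fintype_card).symm

end LovaszAux

namespace LovaszAux

lemma bot_fiber_eq (A : SimpleGraph W) (G : SimpleGraph V) :
    Nat.card {f : A →g G // Setoid.ker ⇑f = ⊥} = injCount A G :=
  Nat.card_congr (Equiv.subtypeEquivRight fun f => (Setoid.injective_iff_ker_bot ⇑f).symm)

lemma card_quotient_lt [Fintype W] (s : Setoid W) (hs : s ≠ ⊥) :
    Nat.card (Quotient s) < Fintype.card W := by
  classical
  letI : Fintype (Quotient s) := Fintype.ofFinite _
  rw [Nat.card_eq_fintype_card]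
  have hninj : ¬ Injective (Quotient.mk s) := by
    intro hinj
    apply hs
    refine Setoid.ext fun a b => ?_
    have : (⊥ : Setoid W) a b ↔ a = b := Iff.rfl
    rw [this]
    exact ⟨fun h => hinj (Quotient.sound h), fun h => h ▸ s.refl a⟩
  exact Fintype.card_lt_of_surjective_not_injective _ Quotient.mk_surjective hninj

end LovaszAux

open LovaszAux
/-- Lovász-type isomorphism theorem for a subgraph-closed class of finite graphs:
if G, H belong to a class 𝓕 of finite graphs closed under taking subgraphs, and every
member of 𝓕 admits the same number of homomorphisms into G as into H, then G and H
are isomorphic. -/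
theorem iso_of_homCount_eq_of_subgraph_closed
    (F : ∀ V : Type, SimpleGraph V → Prop)
    (hclosed : ∀ (V : Type) [Fintype V] (G : SimpleGraph V), F V G →
      ∀ (W : Type) [Fintype W] (B : SimpleGraph W),
        (∃ f : W ↪ V, ∀ a b : W, B.Adj a b → G.Adj (f a) (f b)) → F W B)
    {VG VH : Type} [Fintype VG] [Fintype VH]
    (G : SimpleGraph VG) (H : SimpleGraph VH)
    (hG : F VG G) (hH : F VH H)
    (hhom : ∀ (W : Type) [Fintype W] (A : SimpleGraph W), F W A →
      homCount A G = homCount A H) :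
    Nonempty (G ≃g H) := by
  classical
  have main : ∀ n, ∀ (W : Type) [Fintype W] (A : SimpleGraph W), Fintype.card W = n →
      injCount A G = injCount A H := by
    intro n
    induction n using Nat.strong_induction_on with
    | _ n IH =>
      intro W _ A hcard
      by_cases hex : (∃ f : W ↪ VG, ∀ a b : W, A.Adj a b → G.Adj (f a) (f b)) ∨
          (∃ f : W ↪ VH, ∀ a b : W, A.Adj a b → H.Adj (f a) (f b))
      · have hFA : F W A := hex.elim (fun h => hclosed VG G hG W A h)
          (fun h => hclosed VH H hH W A h)
        have hsum : Nat.card (A →g G) = Nat.card (A →g H) := hhom W A hFA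
        rw [hom_card_eq_sum A G, hom_card_eq_sum A H] at hsum
        have hbot : (⊥ : Setoid W) ∈ (Finset.univ : Finset (Setoid W)) := Finset.mem_univ _
        rw [← Finset.add_sum_erase _ _ hbot, ← Finset.add_sum_erase _ _ hbot] at hsum
        have hterm : ∀ s ∈ (Finset.univ : Finset (Setoid W)).erase ⊥,
            Nat.card {f : A →g G // Setoid.ker ⇑f = s}
              = Nat.card {f : A →g H // Setoid.ker ⇑f = s} := by
          intro s hsmem
          have hsne : s ≠ ⊥ := (Finset.mem_erase.mp hsmem).1
          by_cases hind : Indep A s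
          · rw [Nat.card_congr (fiberEquiv A G s hind), Nat.card_congr (fiberEquiv A H s hind)]
            letI : Fintype (Quotient s) := Fintype.ofFinite _
            have hlt : Fintype.card (Quotient s) < n := by
              have := card_quotient_lt s hsne
              rw [Nat.card_eq_fintype_card] at this
              omega
            exact IH _ hlt (Quotient s) (quotGraph A s) rfl
          · haveI := fiber_isEmpty A G s hind
            haveI := fiber_isEmpty A H s hind
            rw [Nat.card_of_isEmpty, Nat.card_of_isEmpty]
        rw [Finset.sum_congr rfl hterm] at hsum
        have := Nat.add_right_cancel hsum
        rwa [bot_fiber_eq, bot_fiber_eq] at this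
      · push_neg at hex
        have hG0 : IsEmpty {f : A →g G // Injective ⇑f} := by
          constructor
          rintro ⟨f, hf⟩
          obtain ⟨a, b, hab, hn⟩ := hex.1 ⟨⇑f, hf⟩
          exact hn (f.map_rel hab)
        have hH0 : IsEmpty {f : A →g H // Injective ⇑f} := by
          constructor
          rintro ⟨f, hf⟩
          obtain ⟨a, b, hab, hn⟩ := hex.2 ⟨⇑f, hf⟩
          exact hn (f.map_rel hab)
        haveI := hG0; haveI := hH0
        rw [injCount, injCount, Nat.card_of_isEmpty, Nat.card_of_isEmpty]
  -- obtain injective homs both ways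
  have hGH : injCount G G = injCount G H := main _ VG G rfl
  have hHG : injCount H G = injCount H H := main _ VH H rfl
  have hGGpos : 0 < injCount G G := by
    rw [injCount, Nat.card_pos_iff]
    exact ⟨⟨⟨SimpleGraph.Hom.id, injective_id⟩⟩, Finite.of_injective _ Subtype.coe_injective⟩
  have hHHpos : 0 < injCount H H := by
    rw [injCount, Nat.card_pos_iff]
    exact ⟨⟨⟨SimpleGraph.Hom.id, injective_id⟩⟩, Finite.of_injective _ Subtype.coe_injective⟩
  rw [hGH] at hGGpos
  rw [← hHG] at hHHpos
  rw [injCount, Nat.card_pos_iff] at hGGpos hHHpos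
  obtain ⟨⟨f, hf⟩⟩ := hGGpos.1
  obtain ⟨⟨g, hg⟩⟩ := hHHpos.1
  -- now build the isomorphism
  have hcard : Fintype.card VG = Fintype.card VH :=
    le_antisymm (Fintype.card_le_of_embedding ⟨⇑f, hf⟩) (Fintype.card_le_of_embedding ⟨⇑g, hg⟩)
  have hfbij : Bijective ⇑f := (Fintype.bijective_iff_injective_and_card ⇑f).mpr ⟨hf, hcard⟩
  have hgfbij : Bijective (⇑g ∘ ⇑f) := (Finite.injective_iff_bijective).mp (hg.comp hf)
  let p : Equiv.Perm VG := Equiv.ofBijective _ hgfbij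
  have hp : ∀ a b : VG, G.Adj a b → G.Adj (p a) (p b) := fun a b h => g.map_rel (f.map_rel h)
  have hpow : ∀ (m : ℕ) (a b : VG), G.Adj a b → G.Adj ((p ^ m) a) ((p ^ m) b) := by
    intro m
    induction m with
    | zero => intro a b h; simpa using h
    | succ m ih =>
      intro a b h
      have : (p ^ (m + 1)) = p ^ m * p := pow_succ p m
      rw [this]
      simp only [Equiv.Perm.mul_apply]
      exact ih _ _ (hp a b h)
  set k := orderOf p with hk
  have hkpos : 0 < k := orderOf_pos p
  have hpk : p ^ k = 1 := pow_orderOf_eq_one p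
  have hreflect : ∀ a b : VG, H.Adj (f a) (f b) → G.Adj a b := by
    intro a b h
    have h1 : G.Adj (p a) (p b) := g.map_rel h
    have h2 : G.Adj ((p ^ (k - 1)) (p a)) ((p ^ (k - 1)) (p b)) := hpow (k - 1) _ _ h1
    have h3 : ∀ x : VG, (p ^ (k - 1)) (p x) = x := by
      intro x
      have : p ^ (k - 1) * p = p ^ k := by
        rw [← pow_succ]
        congr 1
        omega
      calc (p ^ (k - 1)) (p x) = (p ^ (k - 1) * p) x := rfl
        _ = (p ^ k) x := by rw [this]
        _ = x := by rw [hpk]; rfl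
    rwa [h3 a, h3 b] at h2
  exact ⟨⟨Equiv.ofBijective ⇑f hfbij, fun {a b} => ⟨hreflect a b, f.map_rel⟩⟩⟩
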